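/- arXiv:2108.03057 — 2 statements merged into one kernel-verified Lean document; each statement's English description precedes it below -/
import Mathlib

section
/- Let X be a real Banach space. Then β_{C(Δ)*}(X*) ≤ α_{(⊕ₙ₌₀^∞ ℓ∞^{2ⁿ})_{ℓ₁}}(X), where X* is the dual space of X and C(Δ)* is the dual of C(Δ). -/
open Filter Topology NormedSpace
set_option maxHeartbeats 1000000
set_option synthInstance.maxHeartbeats 200000

open scoped ENNReal

/-- The Banach–Mazur distance `d(Y,Z)`: the infimum of `‖T‖·‖T⁻¹‖` over all bounded linear
isomorphisms `T : Y → Z` (`∞` if none exists). -/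
noncomputable def BMdist (Y Z : Type*) [NormedAddCommGroup Y] [NormedSpace ℝ Y]
    [NormedAddCommGroup Z] [NormedSpace ℝ Z] : ℝ≥0∞ :=
  ⨅ T : Y ≃L[ℝ] Z, ENNReal.ofReal (‖(T : Y →L[ℝ] Z)‖ * ‖(T.symm : Z →L[ℝ] Y)‖)

/-- `α_Y(X)`: the infimum of `d(Y,Z)` over all closed linear subspaces `Z` of `X`. -/
noncomputable def alphaQ (Y X : Type*) [NormedAddCommGroup Y] [NormedSpace ℝ Y]
    [NormedAddCommGroup X] [NormedSpace ℝ X] : ℝ≥0∞ :=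
  ⨅ (Z : Submodule ℝ X) (_ : IsClosed (Z : Set X)), BMdist Y Z

/-- `β_Y(X)`: the infimum of `‖A‖·‖B‖` over all pairs of bounded linear operators
`A : X → Y`, `B : Y → X` with `A ∘ B = id_Y` (`∞` if none exists). -/
noncomputable def betaQ (Y X : Type*) [NormedAddCommGroup Y] [NormedSpace ℝ Y]
    [NormedAddCommGroup X] [NormedSpace ℝ X] : ℝ≥0∞ :=
  ⨅ p : {p : (X →L[ℝ] Y) × (Y →L[ℝ] X) // p.1.comp p.2 = ContinuousLinearMap.id ℝ Y},
    ENNReal.ofReal (‖p.val.1‖ * ‖p.val.2‖)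



noncomputable def ulim (U : Ultrafilter ℕ) (f : ℕ → ℝ) : ℝ := by
  classical exact if h : ∃ L, Filter.Tendsto f (U : Filter ℕ) (nhds L) then h.choose else 0

theorem ulim_eq {U : Ultrafilter ℕ} {f : ℕ → ℝ} {L : ℝ}
    (h : Filter.Tendsto f (U : Filter ℕ) (nhds L)) : ulim U f = L := by
  have he : ∃ L, Filter.Tendsto f (U : Filter ℕ) (nhds L) := ⟨L, h⟩
  rw [ulim]
  
  rw [dif_pos he]
  exact tendsto_nhds_unique he.choose_spec h

theorem tendsto_ulim {U : Ultrafilter ℕ} {f : ℕ → ℝ} {C : ℝ}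
    (h : ∀ n, |f n| ≤ C) : Filter.Tendsto f (U : Filter ℕ) (nhds (ulim U f)) := by
  have hs : (U.map f : Filter ℝ) ≤ Filter.principal (Set.Icc (-C) C) := by
    rw [Filter.le_principal_iff]
    exact Filter.eventually_map.2 (Filter.Eventually.of_forall fun n => abs_le.1 (h n))
  obtain ⟨a, -, ha⟩ := isCompact_Icc.ultrafilter_le_nhds (U.map f) hs
  have ht : Filter.Tendsto f (U : Filter ℕ) (nhds a) := ha
  rwa [ulim_eq ht]

theorem abs_ulim_le {U : Ultrafilter ℕ} {f : ℕ → ℝ} {C : ℝ}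
    (h : ∀ n, |f n| ≤ C) : |ulim U f| ≤ C := by
  have hC : ∀ᶠ n in (U : Filter ℕ), f n ∈ Set.Icc (-C) C :=
    Filter.Eventually.of_forall fun n => abs_le.1 (h n)
  exact abs_le.2 (isClosed_Icc.mem_of_tendsto (tendsto_ulim h) hC)

abbrev Cant := ℕ → Bool

def rho (N : ℕ) (t : Cant) : Cant := fun i => if i < N then t i else false

theorem continuous_rho (N : ℕ) : Continuous (rho N) := by
  refine continuous_pi fun i => ?_
  by_cases h : i < N
  · simpa [rho, h] using (continuous_apply i)
  · simpa [rho, h] using continuous_const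

noncomputable def ρc (N : ℕ) : C(Cant, Cant) := ⟨rho N, continuous_rho N⟩

theorem rho_rho {N M : ℕ} (h : N ≤ M) (t : Cant) : rho N (rho M t) = rho N t := by
  funext i
  simp only [rho]
  by_cases hi : i < N
  · simp [hi, lt_of_lt_of_le hi h]
  · simp [hi]

noncomputable def eqv (N : ℕ) : Fin (2 ^ N) ≃ (Fin N → Bool) :=
  finFunctionFinEquiv.symm.trans (Equiv.piCongrRight fun _ => finTwoEquiv)

noncomputable def jmap (N : ℕ) (s : Fin (2 ^ N)) : Cant :=
  fun i => if h : i < N then eqv N s ⟨i, h⟩ else false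

noncomputable def rmp (N : ℕ) (t : Cant) : Fin (2 ^ N) :=
  (eqv N).symm (fun i => t i)

theorem jmap_rmp (N : ℕ) (t : Cant) : jmap N (rmp N t) = rho N t := by
  funext i
  simp only [jmap, rmp, rho, Equiv.apply_symm_apply]
  by_cases h : i < N <;> simp [h]

theorem rmp_rho {N M : ℕ} (h : N ≤ M) (t : Cant) : rmp N (rho M t) = rmp N t := by
  simp only [rmp]
  congr 1
  funext i
  simp [rho, lt_of_lt_of_le i.2 h]

noncomputable def gam (N : ℕ) (v : Fin (2 ^ N) → ℝ) : C(Cant, ℝ) :=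
  ⟨fun t => v (rmp N t), by
    have h1 : Continuous fun t : Cant => (fun i : Fin N => t i) :=
      continuous_pi fun i => continuous_apply (i : ℕ)
    exact (continuous_of_discreteTopology
      (f := fun w : Fin N → Bool => v ((eqv N).symm w))).comp h1⟩

theorem gam_apply (N : ℕ) (v : Fin (2 ^ N) → ℝ) (t : Cant) : gam N v t = v (rmp N t) := rfl

theorem norm_gam_le (N : ℕ) (v : Fin (2 ^ N) → ℝ) : ‖gam N v‖ ≤ ‖v‖ :=
  (ContinuousMap.norm_le _ (norm_nonneg v)).2 fun t => norm_le_pi_norm v (rmp N t)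

theorem stable_of_ge {g : C(Cant, ℝ)} {N M : ℕ} (h : ∀ t, g (rho N t) = g t) (hNM : N ≤ M)
    (t : Cant) : g (rho M t) = g t := by
  have h1 := h (rho M t)
  rw [rho_rho hNM] at h1
  rw [← h1, h]

noncomputable def cylAlg : Subalgebra ℝ C(Cant, ℝ) where
  carrier := {g | ∃ N, ∀ t, g (rho N t) = g t}
  mul_mem' := by
    rintro a b ⟨N, hN⟩ ⟨M, hM⟩
    exact ⟨max N M, fun t => by
      simp only [ContinuousMap.mul_apply,
        stable_of_ge hN (le_max_left N M) t, stable_of_ge hM (le_max_right N M) t]⟩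
  add_mem' := by
    rintro a b ⟨N, hN⟩ ⟨M, hM⟩
    exact ⟨max N M, fun t => by
      simp only [ContinuousMap.add_apply,
        stable_of_ge hN (le_max_left N M) t, stable_of_ge hM (le_max_right N M) t]⟩
  algebraMap_mem' := fun c => ⟨0, fun t => rfl⟩

theorem cylAlg_separates : cylAlg.SeparatesPoints := by
  intro t t' htt'
  have : ∃ i, t i ≠ t' i := by
    by_contra hc
    push_neg at hc
    exact htt' (funext hc)
  obtain ⟨i, hi⟩ := this
  refine ⟨_, ⟨(⟨fun u => if u i then (1:ℝ) else 0,
    (continuous_of_discreteTopology (f := fun b : Bool => if b then (1:ℝ) else 0)).comp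
      (continuous_apply i)⟩ : C(Cant, ℝ)), ⟨i + 1, fun u => by
        simp only [ContinuousMap.coe_mk, rho, Nat.lt_succ_iff.2 (le_refl i)]
        simp [show i < i + 1 from Nat.lt_succ_self i]⟩, rfl⟩, ?_⟩
  simp only [ContinuousMap.coe_mk]
  cases h1 : t i <;> cases h2 : t' i <;> simp_all

theorem norm_comp_rho_le (h : C(Cant, ℝ)) (N : ℕ) : ‖h.comp (ρc N)‖ ≤ ‖h‖ :=
  (ContinuousMap.norm_le _ (norm_nonneg h)).2 fun t => h.norm_coe_le_norm (rho N t)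

theorem tendsto_comp_rho (f : C(Cant, ℝ)) :
    Filter.Tendsto (fun N => f.comp (ρc N)) Filter.atTop (𝓝 f) := by
  rw [Metric.tendsto_atTop]
  intro ε hε
  have htop : cylAlg.topologicalClosure = ⊤ :=
    ContinuousMap.subalgebra_topologicalClosure_eq_top_of_separatesPoints cylAlg cylAlg_separates
  have hf : f ∈ closure (cylAlg : Set C(Cant, ℝ)) := by
    have : f ∈ cylAlg.topologicalClosure := by rw [htop]; trivial
    exact this
  obtain ⟨g, hg, hfg⟩ := Metric.mem_closure_iff.1 hf (ε / 3) (by linarith)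
  obtain ⟨N₀, hN₀⟩ := hg
  refine ⟨N₀, fun N hN => ?_⟩
  have hgN : g.comp (ρc N) = g := ContinuousMap.ext fun t => stable_of_ge hN₀ hN t
  have key : f.comp (ρc N) - f = (f - g).comp (ρc N) + (g - f) := by
    rw [ContinuousMap.sub_comp, hgN]
    ring
  rw [dist_eq_norm, key]
  have h1 : ‖(f - g).comp (ρc N)‖ ≤ ‖f - g‖ := norm_comp_rho_le _ N
  have h2 : ‖f - g‖ < ε / 3 := by rwa [← dist_eq_norm]
  have h3 : ‖g - f‖ < ε / 3 := by rwa [norm_sub_rev]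
  calc ‖(f - g).comp (ρc N) + (g - f)‖ ≤ ‖(f - g).comp (ρc N)‖ + ‖g - f‖ := norm_add_le _ _
    _ < ε := by linarith

noncomputable abbrev Ysp : Type := lp (fun n : ℕ => Fin (2 ^ n) → ℝ) 1

theorem Ysp.hasSum_norm (y : Ysp) : HasSum (fun n => ‖y n‖) ‖y‖ := by
  have h := lp.hasSum_norm (p := 1) (E := fun n : ℕ => Fin (2 ^ n) → ℝ) (by norm_num) y
  simpa using h

theorem Ysp.summable (y : Ysp) : Summable fun n => ‖y n‖ := (Ysp.hasSum_norm y).summable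

-- evaluation-sum functional: y ↦ ∑' n, y n (w n)  for a "point selection" w
theorem Ysp.summable_eval (y : Ysp) (w : ∀ n, Fin (2 ^ n)) :
    Summable fun n => y n (w n) := by
  refine Summable.of_norm_bounded (Ysp.summable y) fun n => ?_
  exact norm_le_pi_norm (y n) (w n)

noncomputable def qvt (w : ∀ n, Fin (2 ^ n)) : Ysp →L[ℝ] ℝ :=
  LinearMap.mkContinuous
    { toFun := fun y => ∑' n, y n (w n)
      map_add' := fun y z => by
        have h1 := Ysp.summable_eval y w
        have h2 := Ysp.summable_eval z w
        have he : ∀ n, (y + z : Ysp) n (w n) = y n (w n) + z n (w n) := fun n => by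
          simp [lp.coeFn_add]
        simp only [tsum_congr he, Summable.tsum_add h1 h2]
      map_smul' := fun c y => by
        have he : ∀ n, (c • y : Ysp) n (w n) = c * (y n (w n)) := fun n => by
          simp [lp.coeFn_smul]
        simp only [tsum_congr he, tsum_mul_left, RingHom.id_apply, smul_eq_mul] }
    1
    (fun y => by
      simp only [LinearMap.coe_mk, AddHom.coe_mk, one_mul]
      calc ‖∑' n, y n (w n)‖ ≤ ∑' n, ‖y n (w n)‖ :=
            norm_tsum_le_tsum_norm ((Ysp.summable_eval y w).norm)
        _ ≤ ∑' n, ‖y n‖ := by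
            refine Summable.tsum_le_tsum (fun n => norm_le_pi_norm (y n) (w n))
              (Ysp.summable_eval y w).norm (Ysp.summable y)
        _ = ‖y‖ := (Ysp.hasSum_norm y).tsum_eq)

theorem norm_qvt_le (w : ∀ n, Fin (2 ^ n)) : ‖qvt w‖ ≤ 1 :=
  LinearMap.mkContinuous_norm_le _ zero_le_one _

theorem qvt_single (w : ∀ n, Fin (2 ^ n)) (N : ℕ) (v : Fin (2 ^ N) → ℝ) :
    qvt w (lp.single 1 N v) = v (w N) := by
  show (∑' n, (lp.single 1 N v : Ysp) n (w n)) = v (w N)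
  rw [tsum_eq_single N (fun n hn => by rw [lp.single_apply_ne (E := fun n : ℕ => Fin (2 ^ n) → ℝ) 1 N v hn]; rfl)]
  rw [lp.single_apply_self]

theorem norm_single_eq (N : ℕ) (v : Fin (2 ^ N) → ℝ) :
    ‖(lp.single 1 N v : Ysp)‖ = ‖v‖ := by
  have h : HasSum (fun n => ‖(lp.single 1 N v : Ysp) n‖) ‖(lp.single 1 N v : Ysp) N‖ := by
    refine hasSum_single N fun n hn => ?_
    rw [lp.single_apply_ne (E := fun n : ℕ => Fin (2 ^ n) → ℝ) 1 N v hn, norm_zero]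
  rw [lp.single_apply_self] at h
  exact (Ysp.hasSum_norm _).unique h
section Main

variable {X : Type*} [NormedAddCommGroup X] [NormedSpace ℝ X]
  (Z : Submodule ℝ X) (T : Ysp ≃L[ℝ] ↥Z)

noncomputable def umsCLM (M : ℕ) (s : Fin (2 ^ M)) : ↥Z →L[ℝ] ℝ :=
  (qvt (fun n => rmp n (jmap M s))).comp (T.symm : ↥Z →L[ℝ] Ysp)

theorem norm_umsCLM_le (M : ℕ) (s : Fin (2 ^ M)) :
    ‖umsCLM Z T M s‖ ≤ ‖(T.symm : ↥Z →L[ℝ] Ysp)‖ := by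
  calc ‖umsCLM Z T M s‖ ≤ ‖qvt (fun n => rmp n (jmap M s))‖ * ‖(T.symm : ↥Z →L[ℝ] Ysp)‖ :=
        ContinuousLinearMap.opNorm_comp_le _ _
    _ ≤ 1 * ‖(T.symm : ↥Z →L[ℝ] Ysp)‖ := by
        gcongr; exact norm_qvt_le _
    _ = _ := one_mul _

noncomputable def Gext (M : ℕ) (s : Fin (2 ^ M)) : X →L[ℝ] ℝ :=
  (exists_extension_norm_eq Z (umsCLM Z T M s)).choose

theorem Gext_eq (M : ℕ) (s : Fin (2 ^ M)) (z : ↥Z) :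
    Gext Z T M s (z : X) = umsCLM Z T M s z :=
  (exists_extension_norm_eq Z (umsCLM Z T M s)).choose_spec.1 z

theorem norm_Gext_le (M : ℕ) (s : Fin (2 ^ M)) :
    ‖Gext Z T M s‖ ≤ ‖(T.symm : ↥Z →L[ℝ] Ysp)‖ := by
  rw [Gext, (exists_extension_norm_eq Z (umsCLM Z T M s)).choose_spec.2]
  exact norm_umsCLM_le Z T M s


theorem lpsingle_add (N : ℕ) (v w : Fin (2 ^ N) → ℝ) :
    (lp.single 1 N (v + w) : Ysp) = lp.single 1 N v + lp.single 1 N w := by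
  ext n
  by_cases h : n = N
  · subst h
    simp [lp.single_apply_self, lp.coeFn_add]
  · simp [lp.single_apply_ne (E := fun n : ℕ => Fin (2 ^ n) → ℝ) 1 N (v + w) h,
      lp.single_apply_ne (E := fun n : ℕ => Fin (2 ^ n) → ℝ) 1 N v h,
      lp.single_apply_ne (E := fun n : ℕ => Fin (2 ^ n) → ℝ) 1 N w h, lp.coeFn_add]

theorem lpsingle_smul (c : ℝ) (N : ℕ) (v : Fin (2 ^ N) → ℝ) :
    (lp.single 1 N (c • v) : Ysp) = c • lp.single 1 N v := by
  ext n
  by_cases h : n = N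
  · subst h
    simp [lp.single_apply_self, lp.coeFn_smul]
  · simp [lp.single_apply_ne (E := fun n : ℕ => Fin (2 ^ n) → ℝ) 1 N (c • v) h,
      lp.single_apply_ne (E := fun n : ℕ => Fin (2 ^ n) → ℝ) 1 N v h, lp.coeFn_smul]

-- sequence whose ulim defines A
noncomputable def aseq (T : Ysp ≃L[ℝ] ↥Z) (xs : StrongDual ℝ X) (f : C(Cant, ℝ)) (N : ℕ) : ℝ :=
  xs ((T (lp.single 1 N (fun s => f (jmap N s))) : ↥Z) : X)

theorem abs_aseq_le (T : Ysp ≃L[ℝ] ↥Z) (xs : StrongDual ℝ X) (f : C(Cant, ℝ)) (N : ℕ) :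
    |aseq Z T xs f N| ≤ ‖xs‖ * (‖(T : Ysp →L[ℝ] ↥Z)‖ * ‖f‖) := by
  have h0 : ‖fun s => f (jmap N s)‖ ≤ ‖f‖ := by
    refine (pi_norm_le_iff_of_nonneg (norm_nonneg f)).2 fun s => f.norm_coe_le_norm _
  calc |aseq Z T xs f N| ≤ ‖xs‖ * ‖((T (lp.single 1 N (fun s => f (jmap N s))) : ↥Z) : X)‖ :=
        xs.le_opNorm _
    _ = ‖xs‖ * ‖T (lp.single 1 N (fun s => f (jmap N s)))‖ := by rw [Submodule.coe_norm]
    _ ≤ ‖xs‖ * (‖(T : Ysp →L[ℝ] ↥Z)‖ * ‖(lp.single 1 N (fun s => f (jmap N s)) : Ysp)‖) := by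
        gcongr
        exact (T : Ysp →L[ℝ] ↥Z).le_opNorm _
    _ = ‖xs‖ * (‖(T : Ysp →L[ℝ] ↥Z)‖ * ‖fun s => f (jmap N s)‖) := by rw [norm_single_eq]
    _ ≤ ‖xs‖ * (‖(T : Ysp →L[ℝ] ↥Z)‖ * ‖f‖) := by gcongr

theorem aseq_add (T : Ysp ≃L[ℝ] ↥Z) (xs : StrongDual ℝ X) (f g : C(Cant, ℝ)) :
    aseq Z T xs (f + g) = aseq Z T xs f + aseq Z T xs g := by
  funext N
  have : (fun s => (f + g) (jmap N s)) = (fun s => f (jmap N s)) + (fun s => g (jmap N s)) := rfl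
  simp only [aseq, Pi.add_apply, this, lpsingle_add, map_add, Submodule.coe_add]

theorem aseq_smul (T : Ysp ≃L[ℝ] ↥Z) (xs : StrongDual ℝ X) (c : ℝ) (f : C(Cant, ℝ)) :
    aseq Z T xs (c • f) = c • aseq Z T xs f := by
  funext N
  have : (fun s => (c • f) (jmap N s)) = c • (fun s => f (jmap N s)) := rfl
  simp only [aseq, Pi.smul_apply, this, lpsingle_smul, map_smul, Submodule.coe_smul, smul_eq_mul]

noncomputable def Aop (T : Ysp ≃L[ℝ] ↥Z) (U : Ultrafilter ℕ) :
    StrongDual ℝ X →L[ℝ] StrongDual ℝ C(Cant, ℝ) :=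
  LinearMap.mkContinuous
    { toFun := fun xs => LinearMap.mkContinuous (σ := RingHom.id ℝ)
        { toFun := fun f => ulim U (aseq Z T xs f)
          map_add' := fun f g => by
            have bf := tendsto_ulim (U := U) (abs_aseq_le Z T xs f)
            have bg := tendsto_ulim (U := U) (abs_aseq_le Z T xs g)
            refine ulim_eq ?_
            rw [aseq_add]
            exact bf.add bg
          map_smul' := fun c f => by
            have bf := tendsto_ulim (U := U) (abs_aseq_le Z T xs f)
            refine ulim_eq ?_
            rw [aseq_smul]
            exact (bf.const_mul c) }
        (‖xs‖ * ‖(T : Ysp →L[ℝ] ↥Z)‖)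
        (fun f => by
          simp only [LinearMap.coe_mk, AddHom.coe_mk, Real.norm_eq_abs, mul_assoc]
          exact abs_ulim_le (abs_aseq_le Z T xs f))
      map_add' := fun xs ys => by
        refine ContinuousLinearMap.ext fun f => ?_
        have bf := tendsto_ulim (U := U) (abs_aseq_le Z T xs f)
        have bg := tendsto_ulim (U := U) (abs_aseq_le Z T ys f)
        simp only [LinearMap.mkContinuous_apply, LinearMap.coe_mk, AddHom.coe_mk,
          ContinuousLinearMap.add_apply]
        refine ulim_eq ?_
        have : aseq Z T (xs + ys) f = aseq Z T xs f + aseq Z T ys f := by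
          funext N; simp [aseq]
        rw [this]
        exact bf.add bg
      map_smul' := fun c xs => by
        refine ContinuousLinearMap.ext fun f => ?_
        have bf := tendsto_ulim (U := U) (abs_aseq_le Z T xs f)
        simp only [LinearMap.mkContinuous_apply, LinearMap.coe_mk, AddHom.coe_mk,
          RingHom.id_apply, ContinuousLinearMap.coe_smul', Pi.smul_apply, smul_eq_mul]
        refine ulim_eq ?_
        have : aseq Z T (c • xs) f = c • aseq Z T xs f := by
          funext N; simp [aseq]
        rw [this]
        exact bf.const_mul c }
    ‖(T : Ysp →L[ℝ] ↥Z)‖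
    (fun xs => by
      simp only [LinearMap.coe_mk, AddHom.coe_mk]
      refine (LinearMap.mkContinuous_norm_le _
        (mul_nonneg (norm_nonneg xs) (norm_nonneg ((T : Ysp →L[ℝ] ↥Z)))) _).trans ?_
      rw [mul_comm])

theorem norm_Aop_le (T : Ysp ≃L[ℝ] ↥Z) (U : Ultrafilter ℕ) :
    @norm _ (ContinuousLinearMap.hasOpNorm (𝕜 := ℝ) (𝕜₂ := ℝ) (σ₁₂ := RingHom.id ℝ) (E := StrongDual ℝ X) (F := StrongDual ℝ C(Cant, ℝ))) (Aop Z T U) ≤ ‖(T : Ysp →L[ℝ] ↥Z)‖ := by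
  unfold Aop
  exact LinearMap.mkContinuous_norm_le  (𝕜 := ℝ) (𝕜₂ := ℝ) (σ₁₂ := RingHom.id ℝ) (E := StrongDual ℝ X) (F := StrongDual ℝ C(Cant, ℝ)) _ (norm_nonneg ((T : Ysp →L[ℝ] ↥Z))) _

theorem Aop_apply (T : Ysp ≃L[ℝ] ↥Z) (U : Ultrafilter ℕ) (xs : StrongDual ℝ X) (f : C(Cant, ℝ)) :
    Aop Z T U xs f = ulim U (aseq Z T xs f) := rfl

theorem gam_add (N : ℕ) (v w : Fin (2 ^ N) → ℝ) : gam N (v + w) = gam N v + gam N w :=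
  ContinuousMap.ext fun _ => rfl

theorem gam_smul (N : ℕ) (c : ℝ) (v : Fin (2 ^ N) → ℝ) : gam N (c • v) = c • gam N v :=
  ContinuousMap.ext fun _ => rfl

noncomputable def bseq (T : Ysp ≃L[ℝ] ↥Z) (μ : StrongDual ℝ C(Cant, ℝ)) (x : X) (M : ℕ) : ℝ :=
  μ (gam M (fun s => Gext Z T M s x))

theorem abs_bseq_le (T : Ysp ≃L[ℝ] ↥Z) (μ : StrongDual ℝ C(Cant, ℝ)) (x : X) (M : ℕ) :
    |bseq Z T μ x M| ≤ ‖μ‖ * (‖(T.symm : ↥Z →L[ℝ] Ysp)‖ * ‖x‖) := by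
  have h0 : ‖fun s => Gext Z T M s x‖ ≤ ‖(T.symm : ↥Z →L[ℝ] Ysp)‖ * ‖x‖ := by
    refine (pi_norm_le_iff_of_nonneg
      (mul_nonneg (norm_nonneg ((T.symm : ↥Z →L[ℝ] Ysp))) (norm_nonneg x))).2 fun s => ?_
    calc ‖Gext Z T M s x‖ ≤ ‖Gext Z T M s‖ * ‖x‖ := (Gext Z T M s).le_opNorm x
      _ ≤ ‖(T.symm : ↥Z →L[ℝ] Ysp)‖ * ‖x‖ := by gcongr; exact norm_Gext_le Z T M s
  calc |bseq Z T μ x M| ≤ ‖μ‖ * ‖gam M (fun s => Gext Z T M s x)‖ := μ.le_opNorm _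
    _ ≤ ‖μ‖ * ‖fun s => Gext Z T M s x‖ := by gcongr; exact norm_gam_le _ _
    _ ≤ ‖μ‖ * (‖(T.symm : ↥Z →L[ℝ] Ysp)‖ * ‖x‖) := by gcongr

theorem bseq_add (T : Ysp ≃L[ℝ] ↥Z) (μ : StrongDual ℝ C(Cant, ℝ)) (x x' : X) :
    bseq Z T μ (x + x') = bseq Z T μ x + bseq Z T μ x' := by
  funext M
  have : (fun s => Gext Z T M s (x + x')) =
      (fun s => Gext Z T M s x) + (fun s => Gext Z T M s x') := by
    funext s; simp
  unfold bseq
  rw [this, gam_add, map_add, Pi.add_apply]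

theorem bseq_smul (T : Ysp ≃L[ℝ] ↥Z) (μ : StrongDual ℝ C(Cant, ℝ)) (c : ℝ) (x : X) :
    bseq Z T μ (c • x) = c • bseq Z T μ x := by
  funext M
  have : (fun s => Gext Z T M s (c • x)) = c • (fun s => Gext Z T M s x) := by
    funext s; simp
  unfold bseq
  rw [this, gam_smul, map_smul, smul_eq_mul, Pi.smul_apply, smul_eq_mul]

noncomputable def Bop (T : Ysp ≃L[ℝ] ↥Z) (U : Ultrafilter ℕ) :
    StrongDual ℝ C(Cant, ℝ) →L[ℝ] StrongDual ℝ X :=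
  LinearMap.mkContinuous
    { toFun := fun μ => LinearMap.mkContinuous
        { toFun := fun x => ulim U (bseq Z T μ x)
          map_add' := fun x x' => by
            have bf := tendsto_ulim (U := U) (abs_bseq_le Z T μ x)
            have bg := tendsto_ulim (U := U) (abs_bseq_le Z T μ x')
            refine ulim_eq ?_
            rw [bseq_add]
            exact bf.add bg
          map_smul' := fun c x => by
            have bf := tendsto_ulim (U := U) (abs_bseq_le Z T μ x)
            refine ulim_eq ?_
            rw [bseq_smul]
            exact bf.const_mul c }
        (‖μ‖ * ‖(T.symm : ↥Z →L[ℝ] Ysp)‖)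
        (fun x => by
          simp only [LinearMap.coe_mk, AddHom.coe_mk, Real.norm_eq_abs, mul_assoc]
          exact abs_ulim_le (abs_bseq_le Z T μ x))
      map_add' := fun μ ν => by
        refine ContinuousLinearMap.ext fun x => ?_
        have bf := tendsto_ulim (U := U) (abs_bseq_le Z T μ x)
        have bg := tendsto_ulim (U := U) (abs_bseq_le Z T ν x)
        simp only [LinearMap.mkContinuous_apply, LinearMap.coe_mk, AddHom.coe_mk,
          ContinuousLinearMap.add_apply]
        refine ulim_eq ?_
        have : bseq Z T (μ + ν) x = bseq Z T μ x + bseq Z T ν x := by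
          funext M; simp [bseq]
        rw [this]
        exact bf.add bg
      map_smul' := fun c μ => by
        refine ContinuousLinearMap.ext fun x => ?_
        have bf := tendsto_ulim (U := U) (abs_bseq_le Z T μ x)
        simp only [LinearMap.mkContinuous_apply, LinearMap.coe_mk, AddHom.coe_mk,
          RingHom.id_apply, ContinuousLinearMap.coe_smul', Pi.smul_apply, smul_eq_mul]
        refine ulim_eq ?_
        have : bseq Z T (c • μ) x = c • bseq Z T μ x := by
          funext M; simp [bseq]
        rw [this]
        exact bf.const_mul c }
    ‖(T.symm : ↥Z →L[ℝ] Ysp)‖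
    (fun μ => by
      simp only [LinearMap.coe_mk, AddHom.coe_mk]
      refine (LinearMap.mkContinuous_norm_le _
        (mul_nonneg (norm_nonneg μ) (norm_nonneg ((T.symm : ↥Z →L[ℝ] Ysp)))) _).trans ?_
      rw [mul_comm])

theorem norm_Bop_le (T : Ysp ≃L[ℝ] ↥Z) (U : Ultrafilter ℕ) :
    @norm _ (ContinuousLinearMap.hasOpNorm (𝕜 := ℝ) (𝕜₂ := ℝ) (σ₁₂ := RingHom.id ℝ) (E := StrongDual ℝ C(Cant, ℝ)) (F := StrongDual ℝ X)) (Bop Z T U) ≤ ‖(T.symm : ↥Z →L[ℝ] Ysp)‖ := by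
  unfold Bop
  exact LinearMap.mkContinuous_norm_le  (𝕜 := ℝ) (𝕜₂ := ℝ) (σ₁₂ := RingHom.id ℝ) (E := StrongDual ℝ C(Cant, ℝ)) (F := StrongDual ℝ X) _ (norm_nonneg ((T.symm : ↥Z →L[ℝ] Ysp))) _

theorem Bop_apply (T : Ysp ≃L[ℝ] ↥Z) (U : Ultrafilter ℕ) (μ : StrongDual ℝ C(Cant, ℝ)) (x : X) :
    Bop Z T U μ x = ulim U (bseq Z T μ x) := rfl

theorem Bop_at_single (T : Ysp ≃L[ℝ] ↥Z) (U : Ultrafilter ℕ) (hU : (U : Filter ℕ) ≤ atTop)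
    (μ : StrongDual ℝ C(Cant, ℝ)) (N : ℕ) (v : Fin (2 ^ N) → ℝ) :
    Bop Z T U μ ((T (lp.single 1 N v) : ↥Z) : X) = μ (gam N v) := by
  rw [Bop_apply]
  refine ulim_eq ?_
  have hev : ∀ M, N ≤ M → bseq Z T μ ((T (lp.single 1 N v) : ↥Z) : X) M = μ (gam N v) := by
    intro M hM
    unfold bseq
    have h1 : ∀ s, Gext Z T M s ((T (lp.single 1 N v) : ↥Z) : X) = v (rmp N (jmap M s)) := by
      intro s
      rw [Gext_eq]
      show (qvt (fun n => rmp n (jmap M s))).comp (T.symm : ↥Z →L[ℝ] Ysp)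
        (T (lp.single 1 N v)) = _
      rw [ContinuousLinearMap.comp_apply, ContinuousLinearEquiv.coe_coe,
        ContinuousLinearEquiv.symm_apply_apply, qvt_single]
    have h2 : (fun s => Gext Z T M s ((T (lp.single 1 N v) : ↥Z) : X)) =
        fun s => v (rmp N (jmap M s)) := funext h1
    rw [h2]
    congr 1
    ext t
    show v (rmp N (jmap M (rmp M t))) = v (rmp N t)
    rw [jmap_rmp, rmp_rho hM]
  have ht : Tendsto (fun M => bseq Z T μ ((T (lp.single 1 N v) : ↥Z) : X) M) atTop
      (𝓝 (μ (gam N v))) :=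
    tendsto_const_nhds.congr' ((eventually_ge_atTop N).mono fun M hM => (hev M hM).symm)
  exact ht.mono_left hU

theorem Aop_comp_Bop (T : Ysp ≃L[ℝ] ↥Z) (U : Ultrafilter ℕ) (hU : (U : Filter ℕ) ≤ atTop) :
    (Aop Z T U).comp (Bop Z T U) = ContinuousLinearMap.id ℝ (StrongDual ℝ C(Cant, ℝ)) := by
  refine ContinuousLinearMap.ext fun μ => ?_
  refine ContinuousLinearMap.ext fun f => ?_
  show Aop Z T U (Bop Z T U μ) f = μ f
  rw [Aop_apply]
  have hs : aseq Z T (Bop Z T U μ) f = fun N => μ (f.comp (ρc N)) := by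
    funext N
    show Bop Z T U μ ((T (lp.single 1 N (fun s => f (jmap N s))) : ↥Z) : X) = _
    rw [Bop_at_single Z T U hU]
    congr 1
    ext t
    show f (jmap N (rmp N t)) = f (rho N t)
    rw [jmap_rmp]
  rw [hs]
  refine ulim_eq ?_
  exact ((μ.continuous.tendsto f).comp (tendsto_comp_rho f)).mono_left hU

end Main

open MeasureTheory NormedSpace
open scoped ENNReal

/-- For every real Banach space `X`,
`β_{C(Δ)*}(X*) ≤ α_{(⊕ₙ₌₀^∞ ℓ∞^{2ⁿ})_{ℓ₁}}(X)`, where `Δ = {0,1}^ℕ` is the Cantor set. -/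
theorem stmt5 (X : Type*) [NormedAddCommGroup X] [NormedSpace ℝ X] [CompleteSpace X] :
    betaQ (StrongDual ℝ C((ℕ → Bool), ℝ)) (StrongDual ℝ X)
      ≤ alphaQ (lp (fun n : ℕ => Fin (2 ^ n) → ℝ) 1) X := by
  simp only [alphaQ, BMdist]
  refine le_iInf fun Z => le_iInf fun hZ => le_iInf fun T => ?_
  set U : Ultrafilter ℕ := Ultrafilter.of (atTop : Filter ℕ) with hUdef
  have hU : (U : Filter ℕ) ≤ atTop := Ultrafilter.of_le _
  refine le_trans (iInf_le _ ⟨(Aop Z T U, Bop Z T U), Aop_comp_Bop Z T U hU⟩) ?_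
  exact ENNReal.ofReal_le_ofReal
    (mul_le_mul (norm_Aop_le Z T U) (norm_Bop_le Z T U) (norm_nonneg _) (norm_nonneg _))
end

section
/- Let W be a finite-dimensional real Banach space, let S : W → C(Δ) be a bounded linear operator, and let ε > 0. Then there exists a bounded linear operator Ŝ : W → Z with ‖Ŝ‖ ≤ (1+ε)‖S‖ and ‖S − T∘Ŝ‖ ≤ ε. -/
open scoped Topology
set_option maxHeartbeats 1000000


open MeasureTheory NormedSpace
open scoped ENNReal

/-- The indicator function `g_{n,i} ∈ C(Δ)` of the clopen cylinder
`Δ_{n,i} = {a ∈ {0,1}^ℕ : the first n coordinates of a are the binary digits of i}`. -/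
noncomputable def cylinderIndicator (n i : ℕ) : C((ℕ → Bool), ℝ) :=
  ContinuousMap.comp
    ⟨fun b : Fin n → Bool => if ∀ k : Fin n, b k = i.testBit k then (1 : ℝ) else 0,
      continuous_of_discreteTopology⟩
    ⟨fun a k => a (k : ℕ), by continuity⟩

/-- The unit vector `e_{n,i}` of `Z = (⊕ₙ₌₀^∞ ℓ∞^{2ⁿ})_{ℓ₁}` (for `0 ≤ i < 2ⁿ`). -/
noncomputable def unitVec (n i : ℕ) (h : i < 2 ^ n) : lp (fun n : ℕ => Fin (2 ^ n) → ℝ) 1 :=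
  lp.single 1 n (Pi.single (⟨i, h⟩ : Fin (2 ^ n)) 1)

section Helpers


lemma lp_single_zero {α : Type*} (E : α → Type*) [∀ i, NormedAddCommGroup (E i)]
    [DecidableEq α] (p : ℝ≥0∞) (j : α) : lp.single p j (0 : E j) = 0 := by
  refine lp.ext (funext fun i => ?_)
  by_cases h : i = j
  · subst h; simp [lp.single_apply_self]
  · simp [lp.single_apply_ne p j _ h]

lemma lp_single_add {α : Type*} (E : α → Type*) [∀ i, NormedAddCommGroup (E i)]
    [DecidableEq α] (p : ℝ≥0∞) (j : α) (a b : E j) :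
    lp.single p j (a + b) = lp.single p j a + lp.single p j b := by
  refine lp.ext (funext fun i => ?_)
  by_cases h : i = j
  · subst h; simp [lp.single_apply_self, lp.coeFn_add]
  · simp [lp.single_apply_ne p j _ h, lp.coeFn_add]

lemma lp_single_sum {α ι : Type*} (E : α → Type*) [∀ i, NormedAddCommGroup (E i)]
    [DecidableEq α] (p : ℝ≥0∞) (j : α) (s : Finset ι) (g : ι → E j) :
    lp.single p j (∑ i ∈ s, g i) = ∑ i ∈ s, lp.single p j (g i) := by
  classical
  induction s using Finset.induction with
  | empty => simp [lp_single_zero]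
  | insert a s h ih => simp [Finset.sum_insert h, lp_single_add, ih]

lemma lp_norm_single {α : Type*} (E : α → Type*) [∀ i, NormedAddCommGroup (E i)]
    [DecidableEq α] (j : α) (v : E j) :
    ‖lp.single (E := E) (1 : ℝ≥0∞) j v‖ = ‖v‖ := by
  have h1 := lp.norm_single (E := E) (p := (1 : ℝ≥0∞)) (by norm_num) j v
  simpa using h1

lemma bitmap_bijective (n : ℕ) :
    Function.Bijective (fun (i : Fin (2 ^ n)) (k : Fin n) => (i : ℕ).testBit k) := by
  rw [Fintype.bijective_iff_injective_and_card]
  constructor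
  · intro i j h
    apply Fin.ext
    apply Nat.eq_of_testBit_eq
    intro k
    by_cases hk : k < n
    · exact congrFun h ⟨k, hk⟩
    · rw [Nat.testBit_eq_false_of_lt, Nat.testBit_eq_false_of_lt] <;>
        exact lt_of_lt_of_le (Fin.is_lt _) (Nat.pow_le_pow_right (by norm_num) (le_of_not_gt hk))
  · simp

lemma cylinder_isOpen (n : ℕ) (a : ℕ → Bool) :
    IsOpen {b : ℕ → Bool | ∀ k < n, b k = a k} := by
  have : {b : ℕ → Bool | ∀ k < n, b k = a k} =
      ⋂ k ∈ Finset.range n, (fun b : ℕ → Bool => b k) ⁻¹' {a k} := by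
    ext b; simp only [Set.mem_setOf_eq, Set.mem_iInter, Finset.mem_range, Set.mem_preimage, Set.mem_singleton_iff]
  rw [this]
  exact isOpen_biInter_finset fun k _ =>
    (continuous_apply k).isOpen_preimage _ (isOpen_discrete _)

lemma cylinder_mem_nhds (a : ℕ → Bool) {s : Set (ℕ → Bool)} (hs : s ∈ 𝓝 a) :
    ∃ n : ℕ, {b : ℕ → Bool | ∀ k < n, b k = a k} ⊆ s := by
  rw [nhds_pi, Filter.mem_pi] at hs
  obtain ⟨I, hIf, t, ht, hsub⟩ := hs
  obtain ⟨m, hm⟩ := hIf.bddAbove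
  refine ⟨m + 1, fun b hb => hsub ?_⟩
  intro i hi
  rw [Set.mem_setOf_eq] at hb
  rw [hb i (Nat.lt_succ_of_le (hm hi))]
  have := ht i
  rwa [nhds_discrete, Filter.mem_pure] at this

lemma osc_single (f : C((ℕ → Bool), ℝ)) {δ : ℝ} (hδ : 0 < δ) :
    ∃ n : ℕ, ∀ a b : ℕ → Bool, (∀ k < n, a k = b k) → |f a - f b| ≤ δ := by
  have hU : ∀ a : ℕ → Bool, ∃ n : ℕ,
      {b : ℕ → Bool | ∀ k < n, b k = a k} ⊆ {b | |f b - f a| < δ / 2} := by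
    intro a
    apply cylinder_mem_nhds
    have h1 : {b : ℕ → Bool | |f b - f a| < δ / 2} = f ⁻¹' Metric.ball (f a) (δ / 2) := by
      ext b; simp [Real.dist_eq]
    rw [h1]
    exact f.continuous.continuousAt.preimage_mem_nhds (Metric.ball_mem_nhds _ (by linarith))
  choose N hN using hU
  obtain ⟨A, hA⟩ := isCompact_univ.elim_finite_subcover
    (fun a : ℕ → Bool => {b : ℕ → Bool | ∀ k < N a, b k = a k})
    (fun a => cylinder_isOpen _ _)
    (fun b _ => Set.mem_iUnion.2 ⟨b, fun k _ => rfl⟩)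
  refine ⟨A.sup N, fun a b hab => ?_⟩
  obtain ⟨a', ha'A, ha'⟩ : ∃ a' ∈ A, ∀ k < N a', a k = a' k := by
    have := hA (Set.mem_univ a)
    simpa using this
  have hb : ∀ k < N a', b k = a' k := fun k hk =>
    (hab k (lt_of_lt_of_le hk (Finset.le_sup ha'A))).symm.trans (ha' k hk)
  have h1 := hN a' (Set.mem_setOf_eq ▸ ha' : a ∈ {b | ∀ k < N a', b k = a' k})
  have h2 := hN a' (hb : b ∈ {b | ∀ k < N a', b k = a' k})
  rw [Set.mem_setOf_eq] at h1 h2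
  calc |f a - f b| ≤ |f a - f a'| + |f a' - f b| := abs_sub_le _ _ _
    _ ≤ δ := by rw [abs_sub_comm (f b) (f a')] at h2; linarith

lemma equi {W : Type*} [NormedAddCommGroup W] [NormedSpace ℝ W] [FiniteDimensional ℝ W]
    (S : W →L[ℝ] C((ℕ → Bool), ℝ)) {δ : ℝ} (hδ : 0 < δ) :
    ∃ n : ℕ, ∀ w : W, ‖w‖ ≤ 1 → ∀ a b : ℕ → Bool, (∀ k < n, a k = b k) →
      |S w a - S w b| ≤ δ := by
  set r : ℝ := δ / (3 * (‖S‖ + 1)) with hr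
  have hS0 : (0:ℝ) ≤ ‖S‖ := norm_nonneg S
  have hr0 : 0 < r := by positivity
  obtain ⟨A, hA⟩ := (isCompact_closedBall (0:W) 1).elim_finite_subcover
    (fun w : W => Metric.ball w r) (fun w => Metric.isOpen_ball)
    (fun w _ => Set.mem_iUnion.2 ⟨w, Metric.mem_ball_self hr0⟩)
  have hosc : ∀ w : W, ∃ n, ∀ a b : ℕ → Bool, (∀ k < n, a k = b k) →
      |S w a - S w b| ≤ δ / 3 := fun w => osc_single (S w) (by linarith)
  choose N hN using hosc
  refine ⟨A.sup N, fun w hw a b hab => ?_⟩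
  obtain ⟨w', hw'A, hww'⟩ : ∃ w' ∈ A, w ∈ Metric.ball w' r := by
    have := hA (Metric.mem_closedBall.2 (by simpa using hw))
    simpa using this
  have hd : ‖w - w'‖ < r := by rwa [Metric.mem_ball, dist_eq_norm] at hww'
  have key : ∀ c : ℕ → Bool, |S w c - S w' c| ≤ δ / 3 := by
    intro c
    have h1 : S w c - S w' c = (S (w - w')) c := by simp [map_sub]
    rw [h1, ← Real.norm_eq_abs]
    have h2 : ‖(S (w - w')) c‖ ≤ ‖S (w - w')‖ := ContinuousMap.norm_coe_le_norm _ c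
    have h3 : ‖S (w - w')‖ ≤ ‖S‖ * ‖w - w'‖ := S.le_opNorm _
    have h4 : ‖S‖ * ‖w - w'‖ ≤ (‖S‖ + 1) * r :=
      mul_le_mul (by linarith) hd.le (norm_nonneg _) (by linarith)
    have h5 : (‖S‖ + 1) * r = δ / 3 := by
      rw [hr]; field_simp
    linarith
  have h2 := hN w' a b (fun k hk => hab k (lt_of_lt_of_le hk (Finset.le_sup hw'A)))
  have k1 := key a
  have k2 := key b
  have t1 : |S w a - S w b| ≤ |S w a - S w' a| + |S w' a - S w' b| + |S w' b - S w b| := by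
    have := abs_sub_le (S w a) (S w' a) (S w b)
    have := abs_sub_le (S w' a) (S w' b) (S w b)
    linarith
  rw [abs_sub_comm ((S w') b) ((S w) b)] at t1
  linarith

end Helpers

/-- Let `T : Z → C(Δ)` be the bounded linear operator determined by
`T e_{n,i} = g_{n,i}`. If `W` is a finite-dimensional real Banach space,
`S : W → C(Δ)` a bounded linear operator and `ε > 0`, then there is a bounded linear
operator `Ŝ : W → Z` with `‖Ŝ‖ ≤ (1+ε)‖S‖` and `‖S - T∘Ŝ‖ ≤ ε`. -/
theorem stmt14 (T : lp (fun n : ℕ => Fin (2 ^ n) → ℝ) 1 →L[ℝ] C((ℕ → Bool), ℝ))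
    (hT : ∀ (n i : ℕ) (h : i < 2 ^ n), T (unitVec n i h) = cylinderIndicator n i)
    (W : Type*) [NormedAddCommGroup W] [NormedSpace ℝ W] [FiniteDimensional ℝ W]
    (S : W →L[ℝ] C((ℕ → Bool), ℝ)) (ε : ℝ) (hε : 0 < ε) :
    ∃ Shat : W →L[ℝ] lp (fun n : ℕ => Fin (2 ^ n) → ℝ) 1,
      ‖Shat‖ ≤ (1 + ε) * ‖S‖ ∧ ‖S - T.comp Shat‖ ≤ ε := by
  classical
  obtain ⟨n, hn⟩ := equi S hε
  have hscale : ∀ (w : W) (a b : ℕ → Bool), (∀ k < n, a k = b k) →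
      |S w a - S w b| ≤ ε * ‖w‖ := by
    intro w a b hab
    rcases eq_or_ne w 0 with rfl | hw
    · simp
    · have hw0 : (0:ℝ) < ‖w‖ := norm_pos_iff.2 hw
      have h1 := hn (‖w‖⁻¹ • w) (by rw [norm_smul]; simp [hw0.ne', abs_of_pos hw0]) a b hab
      rw [_root_.map_smul] at h1
      simp only [ContinuousMap.coe_smul, Pi.smul_apply, smul_eq_mul] at h1
      rw [← mul_sub, abs_mul, abs_inv, abs_norm] at h1
      calc |S w a - S w b| = ‖w‖ * (‖w‖⁻¹ * |S w a - S w b|) := by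
            field_simp
        _ ≤ ‖w‖ * ε := mul_le_mul_of_nonneg_left h1 hw0.le
        _ = ε * ‖w‖ := mul_comm _ _
  set v : W → (Fin (2 ^ n) → ℝ) := fun w i => S w (fun k => (i : ℕ).testBit k) with hv
  have hvnorm : ∀ w, ‖v w‖ ≤ ‖S‖ * ‖w‖ := by
    intro w
    rw [pi_norm_le_iff_of_nonneg (by positivity)]
    intro i
    exact le_trans (ContinuousMap.norm_coe_le_norm (S w) _) (S.le_opNorm w)
  let L : W →ₗ[ℝ] lp (fun m : ℕ => Fin (2 ^ m) → ℝ) 1 :=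
    { toFun := fun w => lp.single (E := fun m : ℕ => Fin (2 ^ m) → ℝ) (1 : ℝ≥0∞) n (v w)
      map_add' := fun w u => by
        rw [show v (w + u) = v w + v u from funext fun i => by simp [hv],
          lp_single_add]
      map_smul' := fun c w => by
        dsimp only [RingHom.id_apply]
        rw [show v (c • w) = c • v w from funext fun i => by simp [hv],
          lp.single_smul] }
  have hLnorm : ∀ w, ‖L w‖ ≤ ‖S‖ * ‖w‖ := by
    intro w
    have h1 : ‖lp.single (E := fun m : ℕ => Fin (2 ^ m) → ℝ) (1 : ℝ≥0∞) n (v w)‖ = ‖v w‖ :=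
      lp_norm_single (fun m : ℕ => Fin (2 ^ m) → ℝ) n (v w)
    show ‖lp.single (E := fun m : ℕ => Fin (2 ^ m) → ℝ) (1 : ℝ≥0∞) n (v w)‖ ≤ ‖S‖ * ‖w‖
    rw [h1]
    exact hvnorm w
  set Shat := L.mkContinuous ‖S‖ hLnorm with hShat
  have hTS : ∀ w : W, T (Shat w) = ∑ i : Fin (2 ^ n), v w i • cylinderIndicator n (i : ℕ) := by
    intro w
    have hv1 : v w = ∑ i : Fin (2 ^ n), v w i • (Pi.single i 1 : Fin (2 ^ n) → ℝ) := by
      funext j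
      simp [Pi.single_apply]
    have h1 : Shat w = ∑ i : Fin (2 ^ n), v w i • lp.single (E := fun m : ℕ => Fin (2 ^ m) → ℝ) (1 : ℝ≥0∞) n ((Pi.single i 1 : Fin (2 ^ n) → ℝ)) := by
      show lp.single (E := fun m : ℕ => Fin (2 ^ m) → ℝ) (1 : ℝ≥0∞) n (v w) = _
      conv_lhs => rw [hv1]
      rw [lp_single_sum]
      exact Finset.sum_congr rfl fun i _ => lp.single_smul _ _ _ _
    rw [h1, map_sum]
    refine Finset.sum_congr rfl fun i _ => ?_
    rw [_root_.map_smul]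
    congr 1
    have := hT n (i : ℕ) i.isLt
    rw [show unitVec n (i : ℕ) i.isLt = lp.single (E := fun m : ℕ => Fin (2 ^ m) → ℝ) (1 : ℝ≥0∞) n ((Pi.single i 1 : Fin (2 ^ n) → ℝ)) by
      rw [unitVec]] at this
    exact this
  have heval : ∀ (w : W) (a : ℕ → Bool), ∃ i : Fin (2 ^ n),
      (∀ k < n, a k = (i : ℕ).testBit k) ∧ T (Shat w) a = v w i := by
    intro w a
    obtain ⟨i₀, hi₀⟩ := (bitmap_bijective n).surjective (fun k : Fin n => a k)
    have hcond : ∀ i : Fin (2 ^ n),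
        (∀ k : Fin n, a (k : ℕ) = (i : ℕ).testBit k) ↔ i = i₀ := by
      intro i
      constructor
      · intro h
        apply (bitmap_bijective n).injective
        rw [hi₀]; funext k; exact (h k).symm
      · rintro rfl k; exact (congrFun hi₀ k).symm
    refine ⟨i₀, fun k hk => (congrFun hi₀ ⟨k, hk⟩).symm, ?_⟩
    rw [hTS]
    have happ : (∑ i : Fin (2 ^ n), v w i • cylinderIndicator n (i : ℕ)) a
        = ∑ i : Fin (2 ^ n), v w i *
          (if ∀ k : Fin n, a (k : ℕ) = ((i : ℕ)).testBit k then (1 : ℝ) else 0) := by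
      rw [ContinuousMap.coe_sum, Finset.sum_apply]
      exact Finset.sum_congr rfl fun i _ => rfl
    rw [happ]
    calc ∑ i : Fin (2 ^ n), v w i *
          (if ∀ k : Fin n, a (k : ℕ) = ((i : ℕ)).testBit k then (1 : ℝ) else 0)
        = ∑ i : Fin (2 ^ n), (if i = i₀ then v w i else 0) := by
          refine Finset.sum_congr rfl fun i _ => ?_
          rw [if_congr (hcond i) rfl rfl]
          split <;> simp
      _ = v w i₀ := by simp
  refine ⟨Shat, ?_, ?_⟩
  · have h1 : ‖Shat‖ ≤ ‖S‖ := L.mkContinuous_norm_le (norm_nonneg S) hLnorm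
    nlinarith [norm_nonneg S, hε.le]
  · apply ContinuousLinearMap.opNorm_le_bound _ hε.le
    intro w
    rw [ContinuousLinearMap.sub_apply, ContinuousLinearMap.comp_apply,
      ContinuousMap.norm_le _ (by positivity)]
    intro a
    obtain ⟨i, hi, hval⟩ := heval w a
    rw [ContinuousMap.sub_apply, hval, Real.norm_eq_abs]
    exact hscale w a (fun k => (i : ℕ).testBit k) hi
end
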